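/- Let q be a prime power, n a positive integer, u ∈ F_{q^n} nonzero, and k an integer with 1 ≤ k and 2k < n. Suppose f : F_{q^n} → F_{q^n} is of the form f(x) = Σ_{i=1}^{k} p_i x^{q^i} with p_1, …, p_k ∈ F_{q^n} (an F_{q^n}-linear combination of the Frobenius powers x ↦ x^{q^i} for 1 ≤ i ≤ k), and that f is self-adjoint with respect to ⟨·,·⟩_u, i.e. Tr(u x f(y)) = Tr(u f(x) y) for all x, y ∈ F_{q^n}. Then f = 0. -/

import Mathlib

/-- The trace map of `F_{q^n}/F_q`, written explicitly as
`Tr(x) = x + x^q + ⋯ + x^{q^{n-1}}` (valued in the big field). -/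
def qTr {K : Type*} [CommRing K] (q n : ℕ) (x : K) : K :=
  ∑ i ∈ Finset.range n, x ^ q ^ i

/-- A linearized polynomial of degree < card K vanishing everywhere has zero coefficients. -/
lemma vanish_coeffs {K : Type*} [Field K] [Fintype K] (q n : ℕ) (hq : 2 ≤ q)
    (hcard : Fintype.card K = q ^ n) (g : ℕ → K)
    (h : ∀ x : K, ∑ j ∈ Finset.range n, g j * x ^ q ^ j = 0) :
    ∀ j ∈ Finset.range n, g j = 0 := by
  classical
  have hn : 0 < n := by
    rcases Nat.eq_zero_or_pos n with h0 | h0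
    · exfalso
      have := Fintype.one_lt_card (α := K)
      rw [hcard, h0, pow_zero] at this
      omega
    · exact h0
  set P : Polynomial K := ∑ j ∈ Finset.range n, Polynomial.C (g j) * Polynomial.X ^ q ^ j with hP
  have hdeg : P.natDegree < Fintype.card K := by
    rw [hcard]
    have h1 : P.natDegree ≤ q ^ (n - 1) := by
      apply Polynomial.natDegree_sum_le_of_forall_le
      intro j hj
      refine le_trans (Polynomial.natDegree_C_mul_le _ _) ?_
      refine le_trans (Polynomial.natDegree_X_pow_le _) ?_
      exact Nat.pow_le_pow_right (by omega) (by
        simp only [Finset.mem_range] at hj; omega)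
    exact lt_of_le_of_lt h1 (Nat.pow_lt_pow_right (by omega) (by omega))
  have hP0 : P = 0 := by
    apply Polynomial.eq_zero_of_natDegree_lt_card_of_eval_eq_zero P Function.injective_id _ hdeg
    intro x
    simpa [P, Polynomial.eval_finset_sum] using h x
  intro j hj
  have := congrArg (fun Q => Polynomial.coeff Q (q ^ j)) hP0
  simp only [hP, Polynomial.finset_sum_coeff, Polynomial.coeff_C_mul,
    Polynomial.coeff_X_pow, Polynomial.coeff_zero] at this
  rw [Finset.sum_eq_single j] at this
  · simpa using this
  · intro i hi hij
    have : q ^ j ≠ q ^ i := fun hcon => hij (Nat.pow_right_injective hq hcon).symm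
    simp [this]
  · intro hcon; exact absurd hj hcon

/-- For `1 ≤ k` and `2k < n`, any `F_{q^n}`-linear combination
`f(x) = ∑_{i=1}^{k} p_i x^{q^i}` of the Frobenius powers `x ↦ x^{q^i}`, `1 ≤ i ≤ k`,
which is self-adjoint with respect to `⟨x,y⟩_u = Tr(uxy)` (`u ≠ 0`), is zero. -/
theorem selfadjoint_low_degree_qpoly_eq_zero
    {F K : Type*} [Field F] [Fintype F] [Field K] [Fintype K] [Algebra F K]
    {n k : ℕ} (hn : Module.finrank F K = n)
    (hk : 1 ≤ k) (hkn : 2 * k < n)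
    (u : K) (hu : u ≠ 0) (p : ℕ → K) (f : K → K)
    (hf : ∀ x, f x = ∑ i ∈ Finset.Icc 1 k, p i * x ^ Fintype.card F ^ i)
    (hsa : ∀ x y : K,
      qTr (Fintype.card F) n (u * x * f y) = qTr (Fintype.card F) n (u * f x * y)) :
    ∀ x, f x = 0 := by
  classical
  set q := Fintype.card F with hqdef
  have hq2 : 2 ≤ q := Fintype.one_lt_card
  have hn0 : 0 < n := by omega
  have hcard : Fintype.card K = q ^ n := by
    rw [← hn]; exact Module.card_eq_pow_finrank
  -- characteristic setup
  set pc := ringChar F with hpc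
  haveI : CharP F pc := ringChar.charP F
  obtain ⟨s, hpc_prime, hqs⟩ := FiniteField.card F pc
  haveI : CharP K pc := charP_of_injective_algebraMap (algebraMap F K).injective pc
  haveI : Fact pc.Prime := ⟨hpc_prime⟩
  -- Frobenius additivity
  have hadd : ∀ (a b : K) (m : ℕ), (a + b) ^ q ^ m = a ^ q ^ m + b ^ q ^ m := by
    intro a b m
    rw [show q = pc ^ (s : ℕ) from hqs, ← pow_mul, add_pow_char_pow]
  -- pow q^n = id
  have hqn : ∀ z : K, z ^ q ^ n = z := by
    intro z
    rw [← hcard]; exact FiniteField.pow_card z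
  -- qTr of sums
  have hqTr_add : ∀ a b : K, qTr q n (a + b) = qTr q n a + qTr q n b := by
    intro a b
    unfold qTr
    rw [← Finset.sum_add_distrib]
    exact Finset.sum_congr rfl fun j _ => hadd a b j
  have hqTr_sum : ∀ {ι : Type} (t : Finset ι) (h : ι → K),
      qTr q n (∑ i ∈ t, h i) = ∑ i ∈ t, qTr q n (h i) := by
    intro ι t h
    induction t using Finset.induction_on with
    | empty => simp [qTr, zero_pow (pow_ne_zero _ (by omega : q ≠ 0))]
    | insert _ _ hni ih =>
        rename_i a t'
        rw [Finset.sum_insert hni, hqTr_add, ih, Finset.sum_insert hni]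
  have hqTr_sub : ∀ a b : K, qTr q n (a - b) = qTr q n a - qTr q n b := by
    intro a b
    have := hqTr_add (a - b) b
    rw [sub_add_cancel] at this
    exact (eq_sub_of_add_eq this.symm)
  -- qTr invariant under frobenius
  have hshift : ∀ z : K, qTr q n (z ^ q) = qTr q n z := by
    intro z
    have h1 : ∑ j ∈ Finset.range (n + 1), z ^ q ^ j
        = (∑ j ∈ Finset.range n, z ^ q ^ (j + 1)) + z ^ q ^ 0 :=
      Finset.sum_range_succ' _ n
    have h2 : ∑ j ∈ Finset.range (n + 1), z ^ q ^ j
        = (∑ j ∈ Finset.range n, z ^ q ^ j) + z ^ q ^ n :=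
      Finset.sum_range_succ _ n
    have h3 : ∀ j : ℕ, (z ^ q) ^ q ^ j = z ^ q ^ (j + 1) := by
      intro j; rw [← pow_mul, ← pow_succ']
    unfold qTr
    rw [Finset.sum_congr rfl fun j _ => h3 j]
    have := h1.symm.trans h2
    rw [hqn, pow_zero, pow_one] at this
    exact add_right_cancel this
  have hshiftI : ∀ (i : ℕ) (z : K), qTr q n (z ^ q ^ i) = qTr q n z := by
    intro i
    induction i with
    | zero => intro z; rw [pow_zero, pow_one]
    | succ i ih =>
        intro z
        rw [pow_succ, pow_mul]
        rw [hshift (z ^ q ^ i), ih z]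
  -- nondegeneracy
  have hnondeg : ∀ c : K, (∀ x : K, qTr q n (c * x) = 0) → c = 0 := by
    intro c hc
    have h := vanish_coeffs q n hq2 hcard (fun j => c ^ q ^ j) ?_ 0 (Finset.mem_range.mpr hn0)
    · simpa using h
    · intro x
      have := hc x
      unfold qTr at this
      rw [Finset.sum_congr rfl fun j _ => mul_pow c x (q ^ j)] at this
      exact this
  -- main computation: for all y, u * f y = ∑ i, (u * p i * y) ^ q ^ (n - i)
  have hmain : ∀ y : K,
      u * f y = ∑ i ∈ Finset.Icc 1 k, (u * p i * y) ^ q ^ (n - i) := by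
    intro y
    have key : ∀ x : K,
        qTr q n ((u * f y - ∑ i ∈ Finset.Icc 1 k, (u * p i * y) ^ q ^ (n - i)) * x) = 0 := by
      intro x
      rw [sub_mul, hqTr_sub]
      have e1 : qTr q n (u * f y * x) = qTr q n (u * x * f y) := by ring_nf
      have e2 : qTr q n ((∑ i ∈ Finset.Icc 1 k, (u * p i * y) ^ q ^ (n - i)) * x)
          = qTr q n (u * f x * y) := by
        rw [Finset.sum_mul, hqTr_sum]
        have e3 : ∀ i ∈ Finset.Icc 1 k,
            qTr q n ((u * p i * y) ^ q ^ (n - i) * x) = qTr q n (u * (p i * x ^ q ^ i) * y) := by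
          intro i hi
          have hik : i ≤ k := (Finset.mem_Icc.mp hi).2
          have : (u * (p i * x ^ q ^ i) * y) = ((u * p i * y) ^ q ^ (n - i) * x) ^ q ^ i := by
            rw [mul_pow, ← pow_mul, ← pow_add]
            have : n - i + i = n := by omega
            rw [this, hqn]
            ring
          rw [this, hshiftI]
        rw [Finset.sum_congr rfl e3, ← hqTr_sum]
        congr 1
        rw [hf x, Finset.mul_sum, Finset.sum_mul]
      rw [e1, e2, hsa x y, sub_self]
    have := hnondeg _ key
    exact sub_eq_zero.mp this
  -- extract coefficients
  set t2 : Finset ℕ := (Finset.Icc 1 k).image (fun i => n - i) with ht2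
  set g : ℕ → K := fun j =>
    (if j ∈ Finset.Icc 1 k then u * p j else 0)
      - (if j ∈ t2 then (u * p (n - j)) ^ q ^ j else 0) with hg
  have hinj : ∀ i ∈ Finset.Icc 1 k, ∀ i' ∈ Finset.Icc 1 k, n - i = n - i' → i = i' := by
    intro i hi i' hi' h
    simp only [Finset.mem_Icc] at hi hi'
    omega
  have hvan : ∀ y : K, ∑ j ∈ Finset.range n, g j * y ^ q ^ j = 0 := by
    intro y
    have hsplit : ∑ j ∈ Finset.range n, g j * y ^ q ^ j
        = (∑ j ∈ Finset.range n, (if j ∈ Finset.Icc 1 k then u * p j else 0) * y ^ q ^ j)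
          - ∑ j ∈ Finset.range n, (if j ∈ t2 then (u * p (n - j)) ^ q ^ j else 0) * y ^ q ^ j := by
      rw [← Finset.sum_sub_distrib]
      exact Finset.sum_congr rfl fun j _ => by rw [hg]; ring
    rw [hsplit]
    have hsub1 : Finset.Icc 1 k ⊆ Finset.range n := by
      intro i hi; simp only [Finset.mem_Icc] at hi; simp only [Finset.mem_range]; omega
    have hsub2 : t2 ⊆ Finset.range n := by
      intro j hj
      rw [ht2, Finset.mem_image] at hj
      obtain ⟨i, hi, rfl⟩ := hj
      simp only [Finset.mem_Icc] at hi
      simp only [Finset.mem_range]; omega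
    have e1 : ∑ j ∈ Finset.range n, (if j ∈ Finset.Icc 1 k then u * p j else 0) * y ^ q ^ j
        = u * f y := by
      rw [hf y, Finset.mul_sum]
      rw [← Finset.sum_subset hsub1 (fun j _ hj => by simp [hj])]
      refine Finset.sum_congr rfl fun j hj => ?_
      rw [if_pos hj]; ring
    have e2 : ∑ j ∈ Finset.range n, (if j ∈ t2 then (u * p (n - j)) ^ q ^ j else 0) * y ^ q ^ j
        = ∑ i ∈ Finset.Icc 1 k, (u * p i * y) ^ q ^ (n - i) := by
      rw [← Finset.sum_subset hsub2 (fun j _ hj => by simp [hj])]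
      rw [ht2, Finset.sum_image hinj]
      refine Finset.sum_congr rfl fun i hi => ?_
      have hik : i ≤ k := (Finset.mem_Icc.mp hi).2
      have hni : n - (n - i) = i := by omega
      rw [if_pos (Finset.mem_image.mpr ⟨i, hi, rfl⟩), hni]
      ring
    rw [e1, e2, hmain y, sub_self]
  have hcoeff := vanish_coeffs q n hq2 hcard g hvan
  have hp0 : ∀ i ∈ Finset.Icc 1 k, p i = 0 := by
    intro i hi
    have hik : 1 ≤ i ∧ i ≤ k := Finset.mem_Icc.mp hi
    have hir : i ∈ Finset.range n := Finset.mem_range.mpr (by omega)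
    have hnot : i ∉ t2 := by
      rw [ht2, Finset.mem_image]
      rintro ⟨i', hi', hii⟩
      simp only [Finset.mem_Icc] at hi'
      omega
    have := hcoeff i hir
    rw [hg] at this
    simp only [if_pos hi, if_neg hnot, sub_zero] at this
    exact (mul_eq_zero.mp this).resolve_left hu
  intro x
  rw [hf x]
  exact Finset.sum_eq_zero fun i hi => by rw [hp0 i hi, zero_mul]
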